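/- arXiv:1802.04627 — 2 statements merged into one kernel-verified Lean document; each statement's English description precedes it below -/
import Mathlib

section
/- Let Z ~ N(0, σ²I_n) in ℝⁿ and let r > 0. Among all measurable sets A ⊆ ℝⁿ with Pr{Z ∉ A} ≤ ε, a Euclidean ball centered at the origin achieving Pr{Z ∉ A} = ε has minimal Lebesgue volume. -/
open MeasureTheory

noncomputable def gaussDensity (n : ℕ) (σ : ℝ) (z : EuclideanSpace ℝ (Fin n)) : ℝ :=
  (2 * Real.pi * σ ^ 2) ^ (-(n : ℝ) / 2) * Real.exp (-‖z‖ ^ 2 / (2 * σ ^ 2))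

noncomputable def gaussMeasure (n : ℕ) (σ : ℝ) : Measure (EuclideanSpace ℝ (Fin n)) :=
  volume.withDensity (fun z => ENNReal.ofReal (gaussDensity n σ z))

theorem centered_ball_min_volume (n : ℕ) (σ : ℝ) (hσ : 0 < σ) (ε : ℝ) (hε : 0 ≤ ε)
    (r : ℝ) (hr : 0 < r)
    (hB : gaussMeasure n σ (Metric.closedBall (0 : EuclideanSpace ℝ (Fin n)) r) =
      ENNReal.ofReal (1 - ε))
    (A : Set (EuclideanSpace ℝ (Fin n))) (hA : MeasurableSet A)
    (hAprob : ENNReal.ofReal (1 - ε) ≤ gaussMeasure n σ A) :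
    volume (Metric.closedBall (0 : EuclideanSpace ℝ (Fin n)) r) ≤ volume A := by
  set B := Metric.closedBall (0 : EuclideanSpace ℝ (Fin n)) r with hBdef
  have hBm : MeasurableSet B := measurableSet_closedBall
  set c : ℝ := (2 * Real.pi * σ ^ 2) ^ (-(n : ℝ) / 2) * Real.exp (-r ^ 2 / (2 * σ ^ 2))
    with hcdef
  have hbase : (0:ℝ) < (2 * Real.pi * σ ^ 2) ^ (-(n : ℝ) / 2) := by
    have h2 : (0:ℝ) < 2 * Real.pi * σ ^ 2 := by positivity
    positivity
  have hcpos : 0 < c := by positivity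
  have hσ2 : (0:ℝ) < 2 * σ ^ 2 := by positivity
  -- pointwise bounds
  have hge : ∀ z ∈ B, c ≤ gaussDensity n σ z := by
    intro z hz
    simp only [hBdef, Metric.mem_closedBall, dist_zero_right] at hz
    unfold gaussDensity
    rw [hcdef]
    refine mul_le_mul_of_nonneg_left ?_ hbase.le
    refine Real.exp_le_exp.2 ((div_le_div_iff_of_pos_right hσ2).mpr ?_)
    have : ‖z‖ ^ 2 ≤ r ^ 2 := pow_le_pow_left₀ (norm_nonneg z) hz 2
    linarith
  have hle : ∀ z ∉ B, gaussDensity n σ z ≤ c := by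
    intro z hz
    simp only [hBdef, Metric.mem_closedBall, dist_zero_right, not_le] at hz
    unfold gaussDensity
    rw [hcdef]
    refine mul_le_mul_of_nonneg_left ?_ hbase.le
    refine Real.exp_le_exp.2 ((div_le_div_iff_of_pos_right hσ2).mpr ?_)
    have : r ^ 2 ≤ ‖z‖ ^ 2 := pow_le_pow_left₀ hr.le hz.le 2
    linarith
  have hμ : ∀ S : Set (EuclideanSpace ℝ (Fin n)), MeasurableSet S →
      gaussMeasure n σ S = ∫⁻ z in S, ENNReal.ofReal (gaussDensity n σ z) := by
    intro S hS
    simp [gaussMeasure, withDensity_apply _ hS]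
  -- lower bound on B \ A
  have h1 : ENNReal.ofReal c * volume (B \ A) ≤ gaussMeasure n σ (B \ A) := by
    rw [hμ _ (hBm.diff hA)]
    calc ENNReal.ofReal c * volume (B \ A)
        = ∫⁻ _ in B \ A, ENNReal.ofReal c := by rw [setLIntegral_const]
      _ ≤ ∫⁻ z in B \ A, ENNReal.ofReal (gaussDensity n σ z) := by
          refine setLIntegral_mono' (hBm.diff hA) ?_
          intro z hz
          exact ENNReal.ofReal_le_ofReal (hge z hz.1)
  -- upper bound on A \ B
  have h2 : gaussMeasure n σ (A \ B) ≤ ENNReal.ofReal c * volume (A \ B) := by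
    rw [hμ _ (hA.diff hBm)]
    calc ∫⁻ z in A \ B, ENNReal.ofReal (gaussDensity n σ z)
        ≤ ∫⁻ _ in A \ B, ENNReal.ofReal c := by
          refine setLIntegral_mono' (hA.diff hBm) ?_
          intro z hz
          exact ENNReal.ofReal_le_ofReal (hle z hz.2)
      _ = ENNReal.ofReal c * volume (A \ B) := by rw [setLIntegral_const]
  -- middle: gauss(B \ A) ≤ gauss(A \ B)
  have hBfin : gaussMeasure n σ B ≠ ⊤ := by rw [hB]; exact ENNReal.ofReal_ne_top
  have hABfin : gaussMeasure n σ (A ∩ B) ≠ ⊤ :=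
    ne_top_of_le_ne_top hBfin (measure_mono Set.inter_subset_right)
  have hmid : gaussMeasure n σ (B \ A) ≤ gaussMeasure n σ (A \ B) := by
    have e1 : gaussMeasure n σ (A ∩ B) + gaussMeasure n σ (A \ B) = gaussMeasure n σ A :=
      measure_inter_add_diff A hBm
    have e2 : gaussMeasure n σ (A ∩ B) + gaussMeasure n σ (B \ A) = gaussMeasure n σ B := by
      rw [Set.inter_comm]; exact measure_inter_add_diff B hA
    have : gaussMeasure n σ (A ∩ B) + gaussMeasure n σ (B \ A)
        ≤ gaussMeasure n σ (A ∩ B) + gaussMeasure n σ (A \ B) := by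
      rw [e1, e2, hB]; exact hAprob
    exact (ENNReal.add_le_add_iff_left hABfin).mp this
  -- conclude vol (B \ A) ≤ vol (A \ B)
  have hvol : volume (B \ A) ≤ volume (A \ B) := by
    have h3 : ENNReal.ofReal c * volume (B \ A) ≤ ENNReal.ofReal c * volume (A \ B) :=
      le_trans h1 (le_trans hmid h2)
    exact (ENNReal.mul_le_mul_iff_right (by simp [hcpos]) ENNReal.ofReal_ne_top).mp h3
  calc volume B = volume (A ∩ B) + volume (B \ A) := by
        rw [Set.inter_comm]; exact (measure_inter_add_diff B hA).symm
    _ ≤ volume (A ∩ B) + volume (A \ B) := add_le_add le_rfl hvol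
    _ = volume A := measure_inter_add_diff A hBm
end

section
/- For λ in the range 0 ≤ λ ≤ (1/2)ln(e/2), the value w(λ) solving w - ln(1+w) = 2λ lies in [0,1], and E_r(1 + w(λ)) = λ, where E_r(x) = (1/2)(x - ln x - 1) for 1 ≤ x ≤ 2. -/
theorem Er_matches_lambda (lam : ℝ)
    (hlam : 0 ≤ lam ∧ lam ≤ (1 / 2) * Real.log (Real.exp 1 / 2))
    (w : ℝ) (hw : 0 ≤ w ∧ w - Real.log (1 + w) = 2 * lam) :
    w ∈ Set.Icc (0 : ℝ) 1 ∧
      (1 / 2) * ((1 + w) - Real.log (1 + w) - 1) = lam := by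
  obtain ⟨hw0, heq⟩ := hw
  have hlog : Real.log (Real.exp 1 / 2) = 1 - Real.log 2 := by
    rw [Real.log_div (Real.exp_ne_zero 1) (by norm_num), Real.log_exp]
  have h2lam : 2 * lam ≤ 1 - Real.log 2 := by
    have := hlam.2
    rw [hlog] at this
    linarith
  have hw1 : w ≤ 1 := by
    by_contra h
    push_neg at h
    -- log((1+w)/2) ≤ (1+w)/2 - 1
    have hle : Real.log ((1 + w) / 2) ≤ (1 + w) / 2 - 1 :=
      Real.log_le_sub_one_of_pos (by linarith)
    have hsplit : Real.log ((1 + w) / 2) = Real.log (1 + w) - Real.log 2 := by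
      rw [Real.log_div (by linarith) (by norm_num)]
    have : w - Real.log (1 + w) > 1 - Real.log 2 := by
      have : Real.log (1 + w) - Real.log 2 ≤ (w - 1) / 2 := by
        rw [← hsplit]; linarith
      linarith
    linarith
  refine ⟨⟨hw0, hw1⟩, ?_⟩
  have : (1 : ℝ)/2 * ((1 + w) - Real.log (1 + w) - 1) = (1/2) * (2 * lam) := by
    rw [← heq]; ring
  linarith
end
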